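/- A G-valued random variable X satisfies H(X_1+X_2) = H(X) for independent copies X_1, X_2 of X if and only if X is uniformly distributed on a coset of some finite subgroup of G. -/

import Mathlib

open Real
open scoped BigOperators Pointwise Classical

/-- A finitely supported probability space. -/
structure FinProb (Ω : Type*) [Fintype Ω] where
  p : Ω → ℝ
  nonneg : ∀ ω, 0 ≤ p ω
  sum_one : ∑ ω, p ω = 1

/-- Probability that the random variable `X` takes the value `s`. -/
noncomputable def prob {Ω S : Type*} [Fintype Ω] (μ : FinProb Ω) (X : Ω → S) (s : S) : ℝ :=
  ∑ ω, if X ω = s then μ.p ω else 0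

/-- Shannon entropy of a discrete random variable. -/
noncomputable def entropy {Ω S : Type*} [Fintype Ω] (μ : FinProb Ω) (X : Ω → S) : ℝ :=
  ∑ s ∈ Finset.univ.image X, Real.negMulLog (prob μ X s)

/-- Conditional Shannon entropy `H(X|Y) = H(X,Y) - H(Y)`. -/
noncomputable def condEntropy {Ω S T : Type*} [Fintype Ω] (μ : FinProb Ω)
    (X : Ω → S) (Y : Ω → T) : ℝ :=
  entropy μ (fun ω => (X ω, Y ω)) - entropy μ Y

/-- The essential range of a random variable: values attained with positive probability. -/
noncomputable def rangeF {Ω S : Type*} [Fintype Ω] (μ : FinProb Ω) (X : Ω → S) : Finset S :=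
  (Finset.univ.image X).filter (fun s => prob μ X s ≠ 0)

/-- Two random variables (on possibly different spaces) have the same distribution. -/
def IdentDist {Ω Ω' S : Type*} [Fintype Ω] [Fintype Ω'] (μ : FinProb Ω) (X : Ω → S)
    (μ' : FinProb Ω') (Y : Ω' → S) : Prop :=
  ∀ s, prob μ X s = prob μ' Y s

/-- Independence of two random variables. -/
def IndepRV {Ω S T : Type*} [Fintype Ω] (μ : FinProb Ω) (X : Ω → S) (Y : Ω → T) : Prop :=
  ∀ s t, prob μ (fun ω => (X ω, Y ω)) (s, t) = prob μ X s * prob μ Y t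

/-- Joint independence of a finite family of random variables. -/
def IndepFam {Ω ι : Type*} [Fintype Ω] [Fintype ι] {S : ι → Type*}
    (μ : FinProb Ω) (X : ∀ i, Ω → S i) : Prop :=
  ∀ f : ∀ i, S i, prob μ (fun ω i => X i ω) f = ∏ i, prob μ (X i) (f i)

/-- `X` and `Y` are conditionally independent given `W`. -/
def CondIndepGiven {Ω S T U : Type*} [Fintype Ω] (μ : FinProb Ω)
    (X : Ω → S) (Y : Ω → T) (W : Ω → U) : Prop :=
  ∀ s t u, prob μ (fun ω => (X ω, Y ω, W ω)) (s, t, u) * prob μ W u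
    = prob μ (fun ω => (X ω, W ω)) (s, u) * prob μ (fun ω => (Y ω, W ω)) (t, u)

/-- `Y` is determined by `X` (almost surely). -/
def Determines {Ω S T : Type*} [Fintype Ω] (μ : FinProb Ω) (X : Ω → S) (Y : Ω → T) : Prop :=
  ∃ f : S → T, ∀ ω, μ.p ω ≠ 0 → Y ω = f (X ω)

/-- The entropy transport distance between the distributions of `X` and `Y`:
the infimum of `H(Z)` over random variables `Z` (coupled with a copy `X'` of `X`)
such that `X' + Z` is distributed as `Y`. -/
noncomputable def transDist {Ω₁ Ω₂ G : Type*} [Fintype Ω₁] [Fintype Ω₂] [AddCommGroup G]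
    (μ : FinProb Ω₁) (X : Ω₁ → G) (ν : FinProb Ω₂) (Y : Ω₂ → G) : ℝ :=
  sInf {h : ℝ | ∃ (n : ℕ) (μ' : FinProb (Fin n)) (X' Z : Fin n → G),
    IdentDist μ' X' μ X ∧ IdentDist μ' (fun ω => X' ω + Z ω) ν Y ∧ entropy μ' Z = h}

/-- Conditioning a finitely supported probability space on an event `E`
(returning `μ` unchanged if `E` has zero probability). -/
noncomputable def condFinProb {Ω : Type*} [Fintype Ω] (μ : FinProb Ω) (E : Ω → Prop) :
    FinProb Ω :=
  if h : 0 < ∑ ω, if E ω then μ.p ω else 0 then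
    { p := fun ω => if E ω then μ.p ω / (∑ ω', if E ω' then μ.p ω' else 0) else 0
      nonneg := fun ω => by
        split
        · exact div_nonneg (μ.nonneg ω) h.le
        · exact le_refl 0
      sum_one := by
        have h' : ∀ ω, (if E ω then μ.p ω / (∑ ω', if E ω' then μ.p ω' else 0) else 0)
            = (if E ω then μ.p ω else 0) / (∑ ω', if E ω' then μ.p ω' else 0) := by
          intro ω; split <;> simp
        rw [Finset.sum_congr rfl (fun ω _ => h' ω), ← Finset.sum_div, div_self h.ne'] }
  else μ


section auxlemmas

open Real
open scoped BigOperators Pointwise Classical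

namespace DblAux

variable {Ω S : Type*} [Fintype Ω]

lemma prob_nonneg (μ : FinProb Ω) (X : Ω → S) (s : S) : 0 ≤ prob μ X s := by
  refine Finset.sum_nonneg fun ω _ => ?_
  split
  · exact μ.nonneg ω
  · exact le_refl 0

lemma mem_image_of_prob_ne_zero {μ : FinProb Ω} {X : Ω → S} {s : S}
    (h : prob μ X s ≠ 0) : s ∈ Finset.univ.image X := by
  obtain ⟨ω, -, hω⟩ := Finset.exists_ne_zero_of_sum_ne_zero h
  have : X ω = s := by by_contra hc; simp [hc] at hω
  exact Finset.mem_image.2 ⟨ω, Finset.mem_univ ω, this⟩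

lemma prob_eq_zero_of_not_mem_image {μ : FinProb Ω} {X : Ω → S} {s : S}
    (h : s ∉ Finset.univ.image X) : prob μ X s = 0 := by
  by_contra hc; exact h (mem_image_of_prob_ne_zero hc)

lemma sum_prob_eq_one (μ : FinProb Ω) (X : Ω → S) {B : Finset S}
    (hB : Finset.univ.image X ⊆ B) : ∑ s ∈ B, prob μ X s = 1 := by
  unfold prob
  rw [Finset.sum_comm]
  have : ∀ ω : Ω, ∑ s ∈ B, (if X ω = s then μ.p ω else 0) = μ.p ω := by
    intro ω
    rw [Finset.sum_ite_eq B (X ω) (fun _ => μ.p ω)]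
    exact if_pos (hB (Finset.mem_image.2 ⟨ω, Finset.mem_univ ω, rfl⟩))
  rw [Finset.sum_congr rfl fun ω _ => this ω, μ.sum_one]

lemma entropy_eq_sum_of_support (μ : FinProb Ω) (X : Ω → S) {C : Finset S}
    (h0 : ∀ s ∉ C, prob μ X s = 0) :
    entropy μ X = ∑ s ∈ C, Real.negMulLog (prob μ X s) := by
  unfold entropy
  have h1 : ∑ s ∈ Finset.univ.image X, Real.negMulLog (prob μ X s)
      = ∑ s ∈ Finset.univ.image X ∪ C, Real.negMulLog (prob μ X s) := by
    refine Finset.sum_subset Finset.subset_union_left fun s _ hs => ?_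
    rw [prob_eq_zero_of_not_mem_image hs, Real.negMulLog_zero]
  have h2 : ∑ s ∈ C, Real.negMulLog (prob μ X s)
      = ∑ s ∈ Finset.univ.image X ∪ C, Real.negMulLog (prob μ X s) := by
    refine Finset.sum_subset Finset.subset_union_right fun s _ hs => ?_
    rw [h0 s hs, Real.negMulLog_zero]
  rw [h1, ← h2]

variable {G : Type*} [AddCommGroup G]

lemma sum_shift (A B : Finset G) (f : G → ℝ) (hf : ∀ x ∉ A, f x = 0) (a : G)
    (hB : ∀ b ∈ A, a + b ∈ B) : ∑ s ∈ B, f (s - a) = ∑ b ∈ A, f b := by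
  have hinj : Set.InjOn (fun s => s - a) B := fun x _ y _ h => by
    have : x - a = y - a := h
    exact sub_left_injective this
  rw [← Finset.sum_image (f := f) (g := fun s => s - a) (fun x hx y hy h => hinj hx hy h)]
  refine (Finset.sum_subset ?_ ?_).symm
  · intro b hb
    exact Finset.mem_image.2 ⟨a + b, hB b hb, by simp⟩
  · intro x _ hx
    exact hf x hx

lemma gibbs_eq (A : Finset G) (p q : G → ℝ)
    (hpA : ∀ a ∈ A, 0 < p a) (hpz : ∀ a, a ∉ A → p a = 0)
    (hsum : ∑ a ∈ A, p a = 1)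
    (hq : ∀ s, q s = ∑ a ∈ A, p a * p (s - a))
    (hent : ∑ s ∈ A + A, Real.negMulLog (q s) = ∑ a ∈ A, Real.negMulLog (p a)) :
    ∀ a ∈ A, ∀ s ∈ A + A, p (s - a) = q s := by
  set B := A + A with hB
  have hpnn : ∀ x, 0 ≤ p x := by
    intro x
    by_cases hx : x ∈ A
    · exact (hpA x hx).le
    · exact (hpz x hx).ge
  have hq0 : ∀ s ∈ B, 0 < q s := by
    intro s hs
    obtain ⟨a, ha, b, hb, rfl⟩ := Finset.mem_add.1 hs
    rw [hq]
    refine Finset.sum_pos' (fun i _ => mul_nonneg (hpnn i) (hpnn _)) ⟨a, ha, ?_⟩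
    have : a + b - a = b := by abel
    rw [this]
    exact mul_pos (hpA a ha) (hpA b hb)
  have hshift : ∀ a ∈ A, ∑ s ∈ B, p (s - a) = 1 := by
    intro a ha
    rw [sum_shift A B p hpz a (fun b hb => Finset.add_mem_add ha hb), hsum]
  have hsumq : ∑ s ∈ B, q s = 1 := by
    calc ∑ s ∈ B, q s = ∑ s ∈ B, ∑ a ∈ A, p a * p (s - a) :=
          Finset.sum_congr rfl fun s _ => hq s
    _ = ∑ a ∈ A, ∑ s ∈ B, p a * p (s - a) := Finset.sum_comm
    _ = ∑ a ∈ A, p a * ∑ s ∈ B, p (s - a) := by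
          refine Finset.sum_congr rfl fun a _ => ?_; rw [Finset.mul_sum]
    _ = ∑ a ∈ A, p a := by
          refine Finset.sum_congr rfl fun a ha => ?_; rw [hshift a ha, mul_one]
    _ = 1 := hsum
  set L : G → G → ℝ := fun a s => p a * p (s - a) * (Real.log (q s) - Real.log (p (s - a))) with hL
  set R : G → G → ℝ := fun a s => p a * (q s - p (s - a)) with hR
  have hLR : ∀ a ∈ A, ∀ s ∈ B, L a s ≤ R a s := by
    intro a ha s hs
    by_cases hps : p (s - a) = 0
    · simp only [hL, hR, hps, mul_zero, zero_mul, sub_zero]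
      exact mul_nonneg (hpA a ha).le (hq0 s hs).le
    · have hps' : 0 < p (s - a) := (hpnn _).lt_of_ne (Ne.symm hps)
      have hx : 0 < q s / p (s - a) := div_pos (hq0 s hs) hps'
      have hlog : Real.log (q s / p (s - a)) ≤ q s / p (s - a) - 1 :=
        Real.log_le_sub_one_of_pos hx
      have hld : Real.log (q s / p (s - a)) = Real.log (q s) - Real.log (p (s - a)) :=
        Real.log_div (hq0 s hs).ne' hps
      have h1 : p a * p (s - a) * (Real.log (q s) - Real.log (p (s - a)))
          ≤ p a * p (s - a) * (q s / p (s - a) - 1) := by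
        refine mul_le_mul_of_nonneg_left ?_ (mul_nonneg (hpA a ha).le hps'.le)
        rw [← hld]; exact hlog
      have h2 : p a * p (s - a) * (q s / p (s - a) - 1) = R a s := by
        rw [hR]
        field_simp
      calc L a s ≤ p a * p (s - a) * (q s / p (s - a) - 1) := h1
      _ = R a s := h2
  have hsumR : ∑ s ∈ B, ∑ a ∈ A, R a s = 0 := by
    rw [Finset.sum_comm]
    refine Finset.sum_eq_zero fun a ha => ?_
    simp only [hR, mul_sub]
    rw [Finset.sum_sub_distrib, ← Finset.mul_sum, ← Finset.mul_sum, hsumq, hshift a ha,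
      sub_self]
  have hsumL : ∑ s ∈ B, ∑ a ∈ A, L a s = 0 := by
    have e1 : ∀ s, ∑ a ∈ A, p a * p (s - a) * Real.log (q s) = q s * Real.log (q s) := by
      intro s
      rw [← Finset.sum_mul, ← hq s]
    have e2 : ∀ a ∈ A, ∑ s ∈ B, p (s - a) * Real.log (p (s - a))
        = ∑ b ∈ A, p b * Real.log (p b) := by
      intro a ha
      exact sum_shift A B (fun x => p x * Real.log (p x))
        (fun x hx => by show p x * Real.log (p x) = 0; rw [hpz x hx, zero_mul])
        a (fun b hb => Finset.add_mem_add ha hb)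
    have hsplit : ∑ s ∈ B, ∑ a ∈ A, L a s
        = (∑ s ∈ B, q s * Real.log (q s)) - ∑ a ∈ A, ∑ s ∈ B, p a * (p (s - a) * Real.log (p (s - a))) := by
      simp only [hL, mul_sub, Finset.sum_sub_distrib]
      congr 1
      · exact Finset.sum_congr rfl fun s _ => e1 s
      · rw [Finset.sum_comm]
        exact Finset.sum_congr rfl fun a _ => Finset.sum_congr rfl fun s _ => by ring
    rw [hsplit]
    have e3 : ∑ a ∈ A, ∑ s ∈ B, p a * (p (s - a) * Real.log (p (s - a)))
        = ∑ b ∈ A, p b * Real.log (p b) := by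
      calc ∑ a ∈ A, ∑ s ∈ B, p a * (p (s - a) * Real.log (p (s - a)))
          = ∑ a ∈ A, p a * ∑ s ∈ B, p (s - a) * Real.log (p (s - a)) := by
            refine Finset.sum_congr rfl fun a _ => ?_; rw [Finset.mul_sum]
      _ = ∑ a ∈ A, p a * ∑ b ∈ A, p b * Real.log (p b) := by
            refine Finset.sum_congr rfl fun a ha => ?_; rw [e2 a ha]
      _ = (∑ a ∈ A, p a) * ∑ b ∈ A, p b * Real.log (p b) := by rw [Finset.sum_mul]
      _ = ∑ b ∈ A, p b * Real.log (p b) := by rw [hsum, one_mul]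
    rw [e3]
    have hnml : ∀ (C : Finset G) (f : G → ℝ),
        ∑ x ∈ C, f x * Real.log (f x) = -∑ x ∈ C, Real.negMulLog (f x) := by
      intro C f
      rw [← Finset.sum_neg_distrib]
      exact Finset.sum_congr rfl fun x _ => by simp [Real.negMulLog]
    rw [hnml B q, hnml A p, hent]
    ring
  have hkey : ∀ s ∈ B, ∀ a ∈ A, R a s - L a s = 0 := by
    have htot : ∑ s ∈ B, ∑ a ∈ A, (R a s - L a s) = 0 := by
      rw [Finset.sum_congr rfl fun s _ => Finset.sum_sub_distrib (fun a => R a s) (fun a => L a s), Finset.sum_sub_distrib,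
        hsumR, hsumL, sub_self]
    have houter : ∀ s ∈ B, ∑ a ∈ A, (R a s - L a s) = 0 :=
      (Finset.sum_eq_zero_iff_of_nonneg (fun s hs =>
        Finset.sum_nonneg fun a ha => sub_nonneg.2 (hLR a ha s hs))).1 htot
    intro s hs a ha
    exact (Finset.sum_eq_zero_iff_of_nonneg
      (fun a ha => sub_nonneg.2 (hLR a ha s hs))).1 (houter s hs) a ha
  intro a ha s hs
  have heq : L a s = R a s := by have := hkey s hs a ha; linarith
  by_cases hps : p (s - a) = 0
  · exfalso
    have : R a s = 0 := by rw [← heq]; simp [hL, hps]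
    rw [hR] at this
    simp only [hps, sub_zero] at this
    rcases mul_eq_zero.1 this with h | h
    · exact (hpA a ha).ne' h
    · exact (hq0 s hs).ne' h
  · have hps' : 0 < p (s - a) := (hpnn _).lt_of_ne (Ne.symm hps)
    by_contra hne
    have hx : 0 < q s / p (s - a) := div_pos (hq0 s hs) hps'
    have hx1 : q s / p (s - a) ≠ 1 := by
      intro h
      exact hne ((div_eq_one_iff_eq hps).1 h).symm
    have hlog : Real.log (q s / p (s - a)) < q s / p (s - a) - 1 :=
      Real.log_lt_sub_one_of_pos hx hx1
    have hld : Real.log (q s / p (s - a)) = Real.log (q s) - Real.log (p (s - a)) :=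
      Real.log_div (hq0 s hs).ne' hps
    have hlt : L a s < R a s := by
      have h1 : p a * p (s - a) * (Real.log (q s) - Real.log (p (s - a)))
          < p a * p (s - a) * (q s / p (s - a) - 1) := by
        refine mul_lt_mul_of_pos_left ?_ (mul_pos (hpA a ha) hps')
        rw [← hld]; exact hlog
      have h2 : p a * p (s - a) * (q s / p (s - a) - 1) = R a s := by
        rw [hR]; field_simp
      calc L a s < p a * p (s - a) * (q s / p (s - a) - 1) := h1
      _ = R a s := h2
    exact absurd heq hlt.ne

lemma prob_add_eq {Ω' : Type*} [Fintype Ω'] (μ' : FinProb Ω') (X₁ X₂ : Ω' → G)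
    (hindep : IndepRV μ' X₁ X₂) (s : G) :
    prob μ' (fun ω => X₁ ω + X₂ ω) s
      = ∑ a ∈ Finset.univ.image X₁, prob μ' X₁ a * prob μ' X₂ (s - a) := by
  have step : ∀ a, prob μ' X₁ a * prob μ' X₂ (s - a)
      = ∑ ω, if (X₁ ω, X₂ ω) = (a, s - a) then μ'.p ω else 0 := by
    intro a
    rw [← hindep a (s - a)]
    unfold prob
    refine Finset.sum_congr rfl fun ω _ => ?_
    rcases Classical.em ((X₁ ω, X₂ ω) = (a, s - a)) with h | h
    · rw [if_pos h, if_pos h]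
    · rw [if_neg h, if_neg h]
  rw [Finset.sum_congr rfl fun a _ => step a, Finset.sum_comm]
  unfold prob
  refine Finset.sum_congr rfl fun ω _ => ?_
  by_cases hs : X₁ ω + X₂ ω = s
  · rw [if_pos hs]
    rw [Finset.sum_eq_single_of_mem (X₁ ω) (Finset.mem_image.2 ⟨ω, Finset.mem_univ ω, rfl⟩)
      (fun b _ hb => if_neg (fun h => hb (Prod.ext_iff.1 h).1.symm))]
    have hx2 : X₂ ω = s - X₁ ω := eq_sub_of_add_eq' hs
    rw [if_pos (by rw [hx2])]
  · rw [if_neg hs]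
    refine (Finset.sum_eq_zero fun a _ => ?_).symm
    rw [if_neg]
    intro h
    obtain ⟨h1, h2⟩ := Prod.ext_iff.1 h
    apply hs
    rw [show X₁ ω = a from h1, show X₂ ω = s - a from h2]
    abel

end DblAux
end auxlemmas

open Real DblAux
open scoped BigOperators Pointwise Classical

/-- `H(X₁ + X₂) = H(X)` for independent copies `X₁, X₂` of `X` if and only if
`X` is uniformly distributed on a coset `c + H` of some finite subgroup `H` of `G`. -/
theorem doubling_eq_one_iff_uniform_on_coset {G Ω Ω' : Type*} [AddCommGroup G]
    [Fintype Ω] [Fintype Ω'] (μ : FinProb Ω) (X : Ω → G)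
    (μ' : FinProb Ω') (X₁ X₂ : Ω' → G)
    (h₁ : IdentDist μ' X₁ μ X) (h₂ : IdentDist μ' X₂ μ X) (hindep : IndepRV μ' X₁ X₂) :
    entropy μ' (fun ω => X₁ ω + X₂ ω) = entropy μ X ↔
      ∃ (H : AddSubgroup G) (c : G) (S : Finset G),
        (S : Set G) = c +ᵥ (H : Set G) ∧
        ∀ g : G, prob μ X g = if g ∈ S then ((S.card : ℝ))⁻¹ else 0 := by
  have hP1 : ∀ s, prob μ' X₁ s = prob μ X s := h₁
  have hP2 : ∀ s, prob μ' X₂ s = prob μ X s := h₂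
  set p : G → ℝ := prob μ X with hpdef
  have hpnn : ∀ x, 0 ≤ p x := prob_nonneg μ X
  have hconv0 : ∀ s, prob μ' (fun ω => X₁ ω + X₂ ω) s
      = ∑ a ∈ Finset.univ.image X₁, p a * p (s - a) := by
    intro s
    rw [prob_add_eq μ' X₁ X₂ hindep s]
    exact Finset.sum_congr rfl fun a _ => by rw [hP1, hP2]
  constructor
  · -- forward direction
    intro hent
    set A : Finset G := (Finset.univ.image X).filter (fun a => prob μ X a ≠ 0) with hAdef
    have hAmem : ∀ x, x ∈ A ↔ p x ≠ 0 := by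
      intro x
      constructor
      · intro hx; exact (Finset.mem_filter.1 hx).2
      · intro hx; exact Finset.mem_filter.2 ⟨mem_image_of_prob_ne_zero hx, hx⟩
    have hpA : ∀ a ∈ A, 0 < p a := fun a ha => (hpnn a).lt_of_ne (Ne.symm ((hAmem a).1 ha))
    have hpz : ∀ a, a ∉ A → p a = 0 := fun a ha => not_not.1 (fun h => ha ((hAmem a).2 h))
    have hsumA : ∑ a ∈ A, p a = 1 := by
      rw [hAdef, Finset.sum_filter_ne_zero]
      exact sum_prob_eq_one μ X (Finset.Subset.refl _)
    have hAsub : A ⊆ Finset.univ.image X₁ := fun a ha =>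
      mem_image_of_prob_ne_zero (by rw [hP1]; exact (hAmem a).1 ha)
    set q : G → ℝ := fun s => ∑ a ∈ A, p a * p (s - a) with hqdef
    have hconv : ∀ s, prob μ' (fun ω => X₁ ω + X₂ ω) s = q s := by
      intro s
      rw [hconv0 s]
      refine (Finset.sum_subset hAsub fun x _ hx => ?_).symm
      rw [hpz x hx, zero_mul]
    have hq0 : ∀ s ∈ A + A, 0 < q s := by
      intro s hs
      obtain ⟨a, ha, b, hb, rfl⟩ := Finset.mem_add.1 hs
      refine Finset.sum_pos' (fun i _ => mul_nonneg (hpnn i) (hpnn _)) ⟨a, ha, ?_⟩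
      have : a + b - a = b := by abel
      rw [this]
      exact mul_pos (hpA a ha) (hpA b hb)
    have hqz : ∀ s, s ∉ A + A → q s = 0 := by
      intro s hs
      refine Finset.sum_eq_zero fun a ha => ?_
      by_cases h2 : p (s - a) = 0
      · rw [h2, mul_zero]
      · exfalso
        apply hs
        have hsa : s - a ∈ A := (hAmem _).2 h2
        have := Finset.add_mem_add ha hsa
        have e : a + (s - a) = s := by abel
        rwa [e] at this
    have hentX : entropy μ X = ∑ a ∈ A, Real.negMulLog (p a) :=
      entropy_eq_sum_of_support μ X (fun s hs => hpz s hs)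
    have hentS : entropy μ' (fun ω => X₁ ω + X₂ ω) = ∑ s ∈ A + A, Real.negMulLog (q s) := by
      rw [entropy_eq_sum_of_support μ' _ (C := A + A)
        (fun s hs => by rw [hconv s]; exact hqz s hs)]
      exact Finset.sum_congr rfl fun s _ => by rw [hconv s]
    have hent' : ∑ s ∈ A + A, Real.negMulLog (q s) = ∑ a ∈ A, Real.negMulLog (p a) := by
      rw [← hentS, ← hentX, hent]
    have key : ∀ a ∈ A, ∀ s ∈ A + A, p (s - a) = q s :=
      gibbs_eq A p q hpA hpz hsumA (fun s => rfl) hent'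
    have hAne : A.Nonempty := by
      rcases Finset.eq_empty_or_nonempty A with h | h
      · exfalso; rw [h] at hsumA; simp at hsumA
      · exact h
    obtain ⟨a0, ha0⟩ := hAne
    have hclos : ∀ a ∈ A, ∀ b ∈ A, a + a0 - b ∈ A := by
      intro a ha b hb
      have hs : a + a0 ∈ A + A := Finset.add_mem_add ha ha0
      have hk := key b hb (a + a0) hs
      refine (hAmem _).2 ?_
      rw [hk]
      exact (hq0 _ hs).ne'
    have hunif : ∀ a ∈ A, p a = p a0 := by
      intro a ha
      have hs : a + a0 ∈ A + A := Finset.add_mem_add ha ha0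
      have e1 := key a0 ha0 (a + a0) hs
      have e2 := key a ha (a + a0) hs
      have r1 : a + a0 - a0 = a := by abel
      have r2 : a + a0 - a = a0 := by abel
      rw [r1] at e1
      rw [r2] at e2
      rw [e1, ← e2]
    refine ⟨{ carrier := {g | g + a0 ∈ A}
              zero_mem' := by simpa using ha0
              add_mem' := ?_
              neg_mem' := ?_ }, a0, A, ?_, ?_⟩
    · intro x y hx hy
      have hx' : x + a0 ∈ A := hx
      have hy' : y + a0 ∈ A := hy
      have h1 : a0 + a0 - (y + a0) ∈ A := hclos a0 ha0 (y + a0) hy'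
      have e1 : a0 + a0 - (y + a0) = a0 - y := by abel
      rw [e1] at h1
      have h2 : (x + a0) + a0 - (a0 - y) ∈ A := hclos (x + a0) hx' (a0 - y) h1
      have e2 : (x + a0) + a0 - (a0 - y) = (x + y) + a0 := by abel
      rw [e2] at h2
      exact h2
    · intro x hx
      have hx' : x + a0 ∈ A := hx
      have h1 : a0 + a0 - (x + a0) ∈ A := hclos a0 ha0 (x + a0) hx'
      have e1 : a0 + a0 - (x + a0) = -x + a0 := by abel
      rw [e1] at h1
      exact h1
    · ext x
      constructor
      · intro hx
        have hx' : x ∈ A := hx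
        refine Set.mem_vadd_set.2 ⟨x - a0, ?_, ?_⟩
        · show (x - a0) + a0 ∈ A
          have e : (x - a0) + a0 = x := by abel
          rw [e]
          exact hx'
        · show a0 + (x - a0) = x
          abel
      · intro hx
        obtain ⟨y, hy, hxy⟩ := Set.mem_vadd_set.1 hx
        have hy' : y + a0 ∈ A := hy
        have e : y + a0 = x := by rw [← hxy]; show y + a0 = a0 + y; abel
        rw [e] at hy'
        exact hy'
    · intro g
      by_cases hg : g ∈ A
      · rw [if_pos hg]
        have hcc : (A.card : ℝ) * p a0 = 1 := by
          rw [← hsumA, Finset.sum_congr rfl fun a ha => hunif a ha, Finset.sum_const,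
            nsmul_eq_mul]
        have hpa0 : p a0 = ((A.card : ℝ))⁻¹ := by
          have hcne : (A.card : ℝ) ≠ 0 := by
            intro h
            rw [h, zero_mul] at hcc
            exact zero_ne_one hcc
          field_simp at hcc ⊢
          linarith
        rw [hunif g hg, hpa0]
      · rw [if_neg hg]
        exact hpz g hg
  · -- backward direction
    rintro ⟨H, c, Sf, hS, hprob⟩
    have hone : ∑ s ∈ Finset.univ.image X, p s = 1 := sum_prob_eq_one μ X (Finset.Subset.refl _)
    have hSne : Sf.Nonempty := by
      by_contra h
      rw [Finset.not_nonempty_iff_eq_empty] at h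
      have hz : ∀ s, p s = 0 := fun s => by rw [hprob s, h]; simp
      rw [Finset.sum_congr rfl (fun s _ => hz s)] at hone
      simp at hone
    have hcard : 0 < Sf.card := Finset.card_pos.2 hSne
    have hcR : (0:ℝ) < (Sf.card:ℝ) := by exact_mod_cast hcard
    have hmemS : ∀ g, g ∈ Sf ↔ g - c ∈ H := by
      intro g
      constructor
      · intro hg
        have hg' : (g : G) ∈ (Sf : Set G) := hg
        rw [hS] at hg'
        obtain ⟨y, hy, hxy⟩ := Set.mem_vadd_set.1 hg'
        have e : y = g - c := by
          have : c + y = g := hxy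
          rw [← this]; abel
        rwa [← e]
      · intro hg
        have : g ∈ (Sf : Set G) := by
          rw [hS]
          exact Set.mem_vadd_set.2 ⟨g - c, hg, by show c + (g - c) = g; abel⟩
        exact this
    have hpS : ∀ g ∈ Sf, p g = ((Sf.card:ℝ))⁻¹ := fun g hg => by rw [hprob g, if_pos hg]
    have hpzS : ∀ g, g ∉ Sf → p g = 0 := fun g hg => by rw [hprob g, if_neg hg]
    have hadd : ∀ a ∈ Sf, ∀ b ∈ Sf, a + b - c ∈ Sf := by
      intro a ha b hb
      rw [hmemS]
      have h1 := (hmemS a).1 ha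
      have h2 := (hmemS b).1 hb
      have e : a + b - c - c = (a - c) + (b - c) := by abel
      rw [e]
      exact H.add_mem h1 h2
    have hSsub : Sf ⊆ Finset.univ.image X₁ := fun a ha =>
      mem_image_of_prob_ne_zero (by rw [hP1, hpS a ha]; exact inv_ne_zero hcR.ne')
    have hconvS : ∀ s, prob μ' (fun ω => X₁ ω + X₂ ω) s = ∑ a ∈ Sf, p a * p (s - a) := by
      intro s
      rw [hconv0 s]
      refine (Finset.sum_subset hSsub fun x _ hx => ?_).symm
      rw [hpzS x hx, zero_mul]
    set S' := Sf.image (fun x => c + x) with hS'def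
    have hmemS' : ∀ s, s ∈ S' ↔ s - c ∈ Sf := by
      intro s
      simp only [hS'def, Finset.mem_image]
      constructor
      · rintro ⟨x, hx, rfl⟩
        have e : c + x - c = x := by abel
        rwa [e]
      · intro hx
        exact ⟨s - c, hx, by abel⟩
    have hqval : ∀ s, prob μ' (fun ω => X₁ ω + X₂ ω) s
        = if s ∈ S' then ((Sf.card:ℝ))⁻¹ else 0 := by
      intro s
      rw [hconvS s]
      by_cases hs : s ∈ S'
      · rw [if_pos hs]
        have hterm : ∀ a ∈ Sf, p a * p (s - a) = ((Sf.card:ℝ))⁻¹ * ((Sf.card:ℝ))⁻¹ := by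
          intro a ha
          have hsc : s - c ∈ Sf := (hmemS' s).1 hs
          have hsa : s - a ∈ Sf := by
            rw [hmemS]
            have h1 := (hmemS _).1 hsc
            have h2 := (hmemS a).1 ha
            have e : s - a - c = ((s - c) - c) - (a - c) := by abel
            rw [e]
            exact H.sub_mem h1 h2
          rw [hpS a ha, hpS _ hsa]
        rw [Finset.sum_congr rfl hterm, Finset.sum_const, nsmul_eq_mul, ← mul_assoc,
          mul_inv_cancel₀ hcR.ne', one_mul]
      · rw [if_neg hs]
        refine Finset.sum_eq_zero fun a ha => ?_
        by_cases h2 : p (s - a) = 0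
        · rw [h2, mul_zero]
        · exfalso
          have hsa : s - a ∈ Sf := by
            by_contra hna
            exact h2 (hpzS _ hna)
          apply hs
          rw [hmemS']
          have hadded := hadd a ha (s - a) hsa
          have e : a + (s - a) - c = s - c := by abel
          rwa [e] at hadded
    have hentX : entropy μ X = ∑ s ∈ Sf, Real.negMulLog (p s) :=
      entropy_eq_sum_of_support μ X hpzS
    have hentS : entropy μ' (fun ω => X₁ ω + X₂ ω)
        = ∑ s ∈ S', Real.negMulLog (prob μ' (fun ω => X₁ ω + X₂ ω) s) :=
      entropy_eq_sum_of_support μ' _ (fun s hs => by rw [hqval s, if_neg hs])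
    rw [hentX, hentS]
    have e1 : ∑ s ∈ S', Real.negMulLog (prob μ' (fun ω => X₁ ω + X₂ ω) s)
        = S'.card • Real.negMulLog ((Sf.card:ℝ))⁻¹ := by
      rw [Finset.sum_congr rfl fun s hs => by rw [hqval s, if_pos hs], Finset.sum_const]
    have e2 : ∑ s ∈ Sf, Real.negMulLog (p s) = Sf.card • Real.negMulLog ((Sf.card:ℝ))⁻¹ := by
      rw [Finset.sum_congr rfl fun s hs => by rw [hpS s hs], Finset.sum_const]
    have e3 : S'.card = Sf.card := Finset.card_image_of_injective _ (add_right_injective c)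
    rw [e1, e2, e3]
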